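/- Let Ω ⊆ ℂ be open, let a, b, U be smooth real-valued functions on Ω, let h be a smooth positive real-valued function on Ω, and let L ψ = -h²[(∂ₓ - ia)²ψ + (∂_y - ib)²ψ] + Uψ. Then there exist smooth functions β₁, β₀, β₁*, β₀* : Ω → ℂ such that Lψ = (β₁∂̄ + β₀)((β₁*∂ + β₀*)ψ) for every smooth ψ : Ω → ℂ if and only if U = B, where B = h²(∂ₓb - ∂_y a). -/

import Mathlib

open Complex ComplexConjugate MeasureTheory

noncomputable section

/-- Partial derivative in the x-direction (identifying ℂ with ℝ²). -/
def pdx (f : ℂ → ℂ) (z : ℂ) : ℂ := fderiv ℝ f z 1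

/-- Partial derivative in the y-direction. -/
def pdy (f : ℂ → ℂ) (z : ℂ) : ℂ := fderiv ℝ f z Complex.I

/-- Wirtinger derivative ∂ = (∂ₓ - i ∂_y)/2. -/
def wd (f : ℂ → ℂ) (z : ℂ) : ℂ := (pdx f z - Complex.I * pdy f z) / 2

/-- Wirtinger derivative ∂̄ = (∂ₓ + i ∂_y)/2. -/
def wdb (f : ℂ → ℂ) (z : ℂ) : ℂ := (pdx f z + Complex.I * pdy f z) / 2

/-- x-derivative of a real-valued function. -/
def pdxR (f : ℂ → ℝ) (z : ℂ) : ℝ := fderiv ℝ f z 1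

/-- y-derivative of a real-valued function. -/
def pdyR (f : ℂ → ℝ) (z : ℂ) : ℝ := fderiv ℝ f z Complex.I

/-- Magnetic field B = h²(∂ₓ b - ∂_y a). -/
def Bf (a b h : ℂ → ℝ) (z : ℂ) : ℝ := (h z)^2 * (pdxR b z - pdyR a z)

/-- Covariant derivative ∇ψ = ∂ψ - iAψ with A = (a - ib)/2. -/
def cd (a b : ℂ → ℝ) (ψ : ℂ → ℂ) (z : ℂ) : ℂ :=
  wd ψ z - Complex.I * (((a z : ℂ) - Complex.I * (b z : ℂ)) / 2) * ψ z

/-- Covariant derivative ∇̄ψ = ∂̄ψ - iĀψ with Ā = (a + ib)/2. -/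
def cdb (a b : ℂ → ℝ) (ψ : ℂ → ℂ) (z : ℂ) : ℂ :=
  wdb ψ z - Complex.I * (((a z : ℂ) + Complex.I * (b z : ℂ)) / 2) * ψ z

/-- Magnetic covariant x-derivative ∇ₓψ = ∂ₓψ - iaψ. -/
def cdx (a : ℂ → ℝ) (ψ : ℂ → ℂ) (z : ℂ) : ℂ := pdx ψ z - Complex.I * (a z : ℂ) * ψ z

/-- Magnetic covariant y-derivative ∇_yψ = ∂_yψ - ibψ. -/
def cdy (b : ℂ → ℝ) (ψ : ℂ → ℂ) (z : ℂ) : ℂ := pdy ψ z - Complex.I * (b z : ℂ) * ψ z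

/-- The Schrödinger operator L ψ = -h²[(∂ₓ - ia)²ψ + (∂_y - ib)²ψ] + Uψ. -/
def LSch (a b h U : ℂ → ℝ) (ψ : ℂ → ℂ) (z : ℂ) : ℂ :=
  -(h z : ℂ)^2 * (cdx a (cdx a ψ) z + cdy b (cdy b ψ) z) + (U z : ℂ) * ψ z

section Auxiliary

variable {f g ψ : ℂ → ℂ} {r a b h U : ℂ → ℝ} {z v c z₀ : ℂ}

lemma fd_add (hf : DifferentiableAt ℝ f z) (hg : DifferentiableAt ℝ g z) :
    fderiv ℝ (fun w => f w + g w) z v = fderiv ℝ f z v + fderiv ℝ g z v := by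
  rw [fderiv_fun_add hf hg]; rfl

lemma fd_sub (hf : DifferentiableAt ℝ f z) (hg : DifferentiableAt ℝ g z) :
    fderiv ℝ (fun w => f w - g w) z v = fderiv ℝ f z v - fderiv ℝ g z v := by
  rw [fderiv_fun_sub hf hg]; rfl

lemma fd_mul (hf : DifferentiableAt ℝ f z) (hg : DifferentiableAt ℝ g z) :
    fderiv ℝ (fun w => f w * g w) z v = f z * fderiv ℝ g z v + g z * fderiv ℝ f z v := by
  rw [fderiv_fun_mul hf hg]; simp [smul_eq_mul]

lemma fd_const_mul (hf : DifferentiableAt ℝ f z) (c : ℂ) :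
    fderiv ℝ (fun w => c * f w) z v = c * fderiv ℝ f z v := by
  rw [fderiv_const_mul hf]; simp [smul_eq_mul]

lemma fd_mul_const (hf : DifferentiableAt ℝ f z) (c : ℂ) :
    fderiv ℝ (fun w => f w * c) z v = fderiv ℝ f z v * c := by
  rw [fderiv_mul_const hf]; simp [smul_eq_mul, mul_comm]

lemma fd_ofReal (hr : DifferentiableAt ℝ r z) :
    fderiv ℝ (fun w => ((r w : ℝ) : ℂ)) z v = ((fderiv ℝ r z v : ℝ) : ℂ) := by
  have : (fun w => ((r w : ℝ) : ℂ)) = Complex.ofRealCLM ∘ r := rfl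
  rw [this, fderiv_comp z Complex.ofRealCLM.differentiableAt hr]; simp

lemma diff_ofReal (hr : DifferentiableAt ℝ r z) :
    DifferentiableAt ℝ (fun w => ((r w : ℝ) : ℂ)) z :=
  Complex.ofRealCLM.differentiableAt.comp z hr

lemma contDiffAt_fderiv_apply (hψ : ContDiffAt ℝ (⊤:ℕ∞) f z) (v : ℂ) :
    ContDiffAt ℝ (⊤:ℕ∞) (fun w => fderiv ℝ f w v) z := by
  have h1 : ContDiffAt ℝ (⊤:ℕ∞) (fderiv ℝ f) z := hψ.fderiv_right (by exact_mod_cast le_refl _)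
  exact h1.clm_apply contDiffAt_const

lemma diff_fderiv_apply (hψ : ContDiffAt ℝ (⊤:ℕ∞) f z) (v : ℂ) :
    DifferentiableAt ℝ (fun w => fderiv ℝ f w v) z :=
  (contDiffAt_fderiv_apply hψ v).differentiableAt (by simp)

lemma fderiv_fderiv_apply (hψ : ContDiffAt ℝ (⊤:ℕ∞) f z) (u v : ℂ) :
    fderiv ℝ (fun w => fderiv ℝ f w v) z u = fderiv ℝ (fderiv ℝ f) z u v := by
  have h1 : ContDiffAt ℝ (⊤:ℕ∞) (fderiv ℝ f) z := hψ.fderiv_right (by exact_mod_cast le_refl _)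
  have h2 : DifferentiableAt ℝ (fderiv ℝ f) z := h1.differentiableAt (by simp)
  have h3 := ((ContinuousLinearMap.apply ℝ ℂ v).hasFDerivAt.comp z h2.hasFDerivAt).fderiv
  have h4 : (fun w => fderiv ℝ f w v) = (ContinuousLinearMap.apply ℝ ℂ v) ∘ (fderiv ℝ f) := rfl
  rw [h4, h3]; rfl

lemma second_symm (hψ : ContDiffAt ℝ (⊤:ℕ∞) f z) (u v : ℂ) :
    fderiv ℝ (fun w => fderiv ℝ f w v) z u = fderiv ℝ (fun w => fderiv ℝ f w u) z v := by
  rw [fderiv_fderiv_apply hψ u v, fderiv_fderiv_apply hψ v u]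
  obtain ⟨s, hs, hfs⟩ := hψ.contDiffOn (m := (1:ℕ∞)) (by exact_mod_cast le_top) (by simp)
  obtain ⟨t, hto, hts, hft⟩ : ∃ t, IsOpen t ∧ z ∈ t ∧ ContDiffOn ℝ (1:ℕ∞) f t := by
    rcases mem_nhds_iff.1 hs with ⟨t, hts, hto, hzt⟩
    exact ⟨t, hto, hzt, hfs.mono hts⟩
  have hdiff : ∀ y ∈ t, HasFDerivAt f (fderiv ℝ f y) y := fun y hy =>
    ((hft.contDiffAt (hto.mem_nhds hy)).differentiableAt (by simp)).hasFDerivAt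
  have h2 : DifferentiableAt ℝ (fderiv ℝ f) z :=
    (hψ.fderiv_right (m := (⊤:ℕ∞)) (by exact_mod_cast le_refl _)).differentiableAt
      (by simp)
  exact second_derivative_symmetric_of_eventually
    (Filter.eventually_of_mem (hto.mem_nhds hts) hdiff) h2.hasFDerivAt u v

lemma wdb_add (hf : DifferentiableAt ℝ f z) (hg : DifferentiableAt ℝ g z) :
    wdb (fun w => f w + g w) z = wdb f z + wdb g z := by
  simp only [wdb, pdx, pdy, fd_add hf hg]; ring

lemma wd_mul (hf : DifferentiableAt ℝ f z) (hg : DifferentiableAt ℝ g z) :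
    wd (fun w => f w * g w) z = f z * wd g z + g z * wd f z := by
  simp only [wd, pdx, pdy, fd_mul hf hg]; ring

lemma wdb_mul (hf : DifferentiableAt ℝ f z) (hg : DifferentiableAt ℝ g z) :
    wdb (fun w => f w * g w) z = f z * wdb g z + g z * wdb f z := by
  simp only [wdb, pdx, pdy, fd_mul hf hg]; ring

lemma wdb_const_mul (hf : DifferentiableAt ℝ f z) (c : ℂ) :
    wdb (fun w => c * f w) z = c * wdb f z := by
  simp only [wdb, pdx, pdy, fd_const_mul hf]; ring

lemma wdb_sub (hf : DifferentiableAt ℝ f z) (hg : DifferentiableAt ℝ g z) :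
    wdb (fun w => f w - g w) z = wdb f z - wdb g z := by
  simp only [wdb, pdx, pdy, fd_sub hf hg]; ring

lemma wdb_ofReal (hr : DifferentiableAt ℝ r z) :
    wdb (fun w => ((r w : ℝ) : ℂ)) z = ((pdxR r z : ℝ) + Complex.I * (pdyR r z : ℝ)) / 2 := by
  simp only [wdb, pdx, pdy, pdxR, pdyR, fd_ofReal hr]

lemma wdb_congr (hfg : f =ᶠ[nhds z] g) : wdb f z = wdb g z := by
  simp only [wdb, pdx, pdy, hfg.fderiv_eq]

lemma wd_const (w : ℂ) : wd (fun _ => c) w = 0 := by simp [wd, pdx, pdy]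

lemma wdb_const (w : ℂ) : wdb (fun _ => c) w = 0 := by simp [wdb, pdx, pdy]

lemma fd_lin : fderiv ℝ (fun w : ℂ => w - z₀) z v = v := by
  rw [fderiv_sub_const]; simp

lemma diff_lin : DifferentiableAt ℝ (fun w : ℂ => w - z₀) z :=
  differentiableAt_id.sub_const _

lemma wd_lin (w : ℂ) : wd (fun x : ℂ => x - z₀) w = 1 := by
  simp only [wd, pdx, pdy, fd_lin]
  rw [Complex.I_mul_I]; norm_num

lemma wdb_lin (w : ℂ) : wdb (fun x : ℂ => x - z₀) w = 0 := by
  simp only [wdb, pdx, pdy, fd_lin]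
  rw [Complex.I_mul_I]; norm_num

lemma fd_conj : fderiv ℝ (fun w : ℂ => (starRingEnd ℂ) w - (starRingEnd ℂ) z₀) z v
    = (starRingEnd ℂ) v := by
  rw [fderiv_sub_const]
  rw [show (⇑(starRingEnd ℂ) : ℂ → ℂ) = ⇑Complex.conjCLE from rfl, Complex.conjCLE.fderiv]; rfl

lemma diff_conj : DifferentiableAt ℝ (fun w : ℂ => (starRingEnd ℂ) w - (starRingEnd ℂ) z₀) z :=
  (Complex.conjCLE.differentiableAt).sub_const _

lemma wd_conj (w : ℂ) : wd (fun x : ℂ => (starRingEnd ℂ) x - (starRingEnd ℂ) z₀) w = 0 := by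
  simp only [wd, pdx, pdy, fd_conj]; simp [Complex.conj_I]

lemma wdb_conj (w : ℂ) : wdb (fun x : ℂ => (starRingEnd ℂ) x - (starRingEnd ℂ) z₀) w = 1 := by
  simp only [wdb, pdx, pdy, fd_conj]; simp [Complex.conj_I]

lemma diff_wd (hψ : ContDiffAt ℝ (⊤:ℕ∞) ψ z) :
    DifferentiableAt ℝ (fun w => wd ψ w) z := by
  have : (fun w => wd ψ w)
      = fun w => (fderiv ℝ ψ w 1 - Complex.I * fderiv ℝ ψ w Complex.I) * (1/2) := by
    funext w; rw [wd, pdx, pdy]; ring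
  rw [this]
  exact ((diff_fderiv_apply hψ 1).sub ((diff_fderiv_apply hψ Complex.I).const_mul _)).mul_const _

lemma LSch_expand (hac : DifferentiableAt ℝ a z) (hbc : DifferentiableAt ℝ b z)
    (hψ : ContDiffAt ℝ (⊤:ℕ∞) ψ z) :
    LSch a b h U ψ z =
      -4*(h z:ℂ)^2 * wdb (fun w => wd ψ w) z
      + 2*Complex.I*(h z:ℂ)^2*((a z:ℂ) + Complex.I*(b z:ℂ)) * wd ψ z
      + 2*Complex.I*(h z:ℂ)^2*((a z:ℂ) - Complex.I*(b z:ℂ)) * wdb ψ z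
      + (Complex.I*(h z:ℂ)^2*((pdxR a z:ℂ) + (pdyR b z:ℂ))
          + (h z:ℂ)^2*((a z:ℂ)^2 + (b z:ℂ)^2) + (U z:ℂ)) * ψ z := by
  have dψ : DifferentiableAt ℝ ψ z := hψ.differentiableAt (by simp)
  have dA : DifferentiableAt ℝ (fun w => ((a w : ℝ) : ℂ)) z := diff_ofReal hac
  have dB : DifferentiableAt ℝ (fun w => ((b w : ℝ) : ℂ)) z := diff_ofReal hbc
  have dX : DifferentiableAt ℝ (fun w => fderiv ℝ ψ w 1) z := diff_fderiv_apply hψ 1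
  have dY : DifferentiableAt ℝ (fun w => fderiv ℝ ψ w Complex.I) z :=
    diff_fderiv_apply hψ Complex.I
  have dAψ : DifferentiableAt ℝ (fun w => Complex.I * ((a w : ℂ) * ψ w)) z :=
    ((dA.mul dψ)).const_mul _
  have dBψ : DifferentiableAt ℝ (fun w => Complex.I * ((b w : ℂ) * ψ w)) z :=
    ((dB.mul dψ)).const_mul _
  have ex : cdx a (cdx a ψ) z =
      (fderiv ℝ (fun w => fderiv ℝ ψ w 1) z 1
        - Complex.I * ((a z:ℂ) * fderiv ℝ ψ z 1 + ψ z * (pdxR a z : ℂ)))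
      - Complex.I * (a z : ℂ) * (fderiv ℝ ψ z 1 - Complex.I * (a z:ℂ) * ψ z) := by
    have h1 : cdx a ψ = fun w => fderiv ℝ ψ w 1 - Complex.I * ((a w : ℂ) * ψ w) := by
      funext w; simp [cdx, pdx, mul_assoc]
    rw [cdx, h1]
    rw [show pdx (fun w => fderiv ℝ ψ w 1 - Complex.I * ((a w:ℂ) * ψ w)) z
        = fderiv ℝ (fun w => fderiv ℝ ψ w 1 - Complex.I * ((a w:ℂ) * ψ w)) z 1 from rfl]
    rw [fd_sub dX dAψ, fd_const_mul (dA.fun_mul dψ), fd_mul dA dψ, fd_ofReal hac]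
    rw [show pdxR a z = fderiv ℝ a z 1 from rfl]
    ring
  have ey : cdy b (cdy b ψ) z =
      (fderiv ℝ (fun w => fderiv ℝ ψ w Complex.I) z Complex.I
        - Complex.I * ((b z:ℂ) * fderiv ℝ ψ z Complex.I + ψ z * (pdyR b z : ℂ)))
      - Complex.I * (b z : ℂ) * (fderiv ℝ ψ z Complex.I - Complex.I * (b z:ℂ) * ψ z) := by
    have h1 : cdy b ψ = fun w => fderiv ℝ ψ w Complex.I - Complex.I * ((b w : ℂ) * ψ w) := by
      funext w; simp [cdy, pdy, mul_assoc]
    rw [cdy, h1]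
    rw [show pdy (fun w => fderiv ℝ ψ w Complex.I - Complex.I * ((b w:ℂ) * ψ w)) z
        = fderiv ℝ (fun w => fderiv ℝ ψ w Complex.I - Complex.I * ((b w:ℂ) * ψ w)) z
            Complex.I from rfl]
    rw [fd_sub dY dBψ, fd_const_mul (dB.fun_mul dψ), fd_mul dB dψ, fd_ofReal hbc]
    rw [show pdyR b z = fderiv ℝ b z Complex.I from rfl]
    ring
  have ewd : (fun w => wd ψ w) =
      fun w => (fderiv ℝ ψ w 1 - Complex.I * fderiv ℝ ψ w Complex.I) * (1/2) := by
    funext w; rw [wd, pdx, pdy]; ring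
  have dIY : DifferentiableAt ℝ (fun w => Complex.I * fderiv ℝ ψ w Complex.I) z := dY.const_mul _
  have ewdb : wdb (fun w => wd ψ w) z =
      ((fderiv ℝ (fun w => fderiv ℝ ψ w 1) z 1
          - Complex.I * fderiv ℝ (fun w => fderiv ℝ ψ w Complex.I) z 1) * (1/2)
        + Complex.I * ((fderiv ℝ (fun w => fderiv ℝ ψ w Complex.I) z 1
          - Complex.I * fderiv ℝ (fun w => fderiv ℝ ψ w Complex.I) z Complex.I) * (1/2))) / 2 := by
    rw [ewd, wdb]
    rw [show pdx (fun w => (fderiv ℝ ψ w 1 - Complex.I * fderiv ℝ ψ w Complex.I) * (1/2)) z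
        = fderiv ℝ (fun w => (fderiv ℝ ψ w 1 - Complex.I * fderiv ℝ ψ w Complex.I) * (1/2)) z 1
        from rfl,
      show pdy (fun w => (fderiv ℝ ψ w 1 - Complex.I * fderiv ℝ ψ w Complex.I) * (1/2)) z
        = fderiv ℝ (fun w => (fderiv ℝ ψ w 1 - Complex.I * fderiv ℝ ψ w Complex.I) * (1/2)) z
            Complex.I from rfl]
    rw [fd_mul_const (dX.fun_sub dIY), fd_mul_const (dX.fun_sub dIY),
      fd_sub dX dIY, fd_sub dX dIY, fd_const_mul dY, fd_const_mul dY]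
    rw [second_symm hψ Complex.I 1]
  rw [LSch, ex, ey, ewdb,
    show wd ψ z = (fderiv ℝ ψ z 1 - Complex.I * fderiv ℝ ψ z Complex.I)/2 from rfl,
    show wdb ψ z = (fderiv ℝ ψ z 1 + Complex.I * fderiv ℝ ψ z Complex.I)/2 from rfl]
  linear_combination ((h z:ℂ)^2 * (-(fderiv ℝ (fun w => fderiv ℝ ψ w Complex.I) z Complex.I)
    + 2*Complex.I*(b z:ℂ)*(fderiv ℝ ψ z Complex.I)
    - ((a z:ℂ)^2+(b z:ℂ)^2)*(ψ z))) * Complex.I_sq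

end Auxiliary

/-- the β-factorisation L = (β₁∂̄ + β₀)(β₁*∂ + β₀*) exists
(with smooth coefficients) iff U = B. -/
theorem beta_factorisation_iff_U_eq_B
    (Ω : Set ℂ) (hΩ : IsOpen Ω) (a b h U : ℂ → ℝ)
    (ha : ContDiffOn ℝ (⊤ : ℕ∞) a Ω) (hb : ContDiffOn ℝ (⊤ : ℕ∞) b Ω)
    (hh : ContDiffOn ℝ (⊤ : ℕ∞) h Ω) (hU : ContDiffOn ℝ (⊤ : ℕ∞) U Ω)
    (hhpos : ∀ z ∈ Ω, 0 < h z) :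
    (∃ β₁ β₀ β₁s β₀s : ℂ → ℂ,
        ContDiffOn ℝ (⊤ : ℕ∞) β₁ Ω ∧ ContDiffOn ℝ (⊤ : ℕ∞) β₀ Ω ∧
        ContDiffOn ℝ (⊤ : ℕ∞) β₁s Ω ∧ ContDiffOn ℝ (⊤ : ℕ∞) β₀s Ω ∧
        ∀ ψ : ℂ → ℂ, ContDiffOn ℝ (⊤ : ℕ∞) ψ Ω → ∀ z ∈ Ω,
          LSch a b h U ψ z =
            β₁ z * wdb (fun w => β₁s w * wd ψ w + β₀s w * ψ w) z +
            β₀ z * (β₁s z * wd ψ z + β₀s z * ψ z)) ↔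
      (∀ z ∈ Ω, U z = Bf a b h z) := by
  have haC : ContDiffOn ℝ (⊤:ℕ∞) (fun z => ((a z : ℝ) : ℂ)) Ω :=
    Complex.ofRealCLM.contDiff.comp_contDiffOn ha
  have hbC : ContDiffOn ℝ (⊤:ℕ∞) (fun z => ((b z : ℝ) : ℂ)) Ω :=
    Complex.ofRealCLM.contDiff.comp_contDiffOn hb
  have hhC : ContDiffOn ℝ (⊤:ℕ∞) (fun z => ((h z : ℝ) : ℂ)) Ω :=
    Complex.ofRealCLM.contDiff.comp_contDiffOn hh
  constructor
  · -- factorisation ⟹ U = B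
    rintro ⟨β₁, β₀, β₁s, β₀s, s₁, s₀, ss₁, ss₀, hfac⟩ z₀ hz₀
    -- pointwise differentiability helpers
    have dAt : ∀ z ∈ Ω, DifferentiableAt ℝ a z := fun z hz =>
      (ha.contDiffAt (hΩ.mem_nhds hz)).differentiableAt (by simp)
    have dBt : ∀ z ∈ Ω, DifferentiableAt ℝ b z := fun z hz =>
      (hb.contDiffAt (hΩ.mem_nhds hz)).differentiableAt (by simp)
    have dβ₁s : ∀ z ∈ Ω, DifferentiableAt ℝ β₁s z := fun z hz =>
      (ss₁.contDiffAt (hΩ.mem_nhds hz)).differentiableAt (by simp)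
    have dβ₀s : ∀ z ∈ Ω, DifferentiableAt ℝ β₀s z := fun z hz =>
      (ss₀.contDiffAt (hΩ.mem_nhds hz)).differentiableAt (by simp)
    have hconj : ContDiff ℝ (⊤:ℕ∞) (fun w : ℂ => (starRingEnd ℂ) w) := Complex.conjCLE.contDiff
    -- E3 : β₁ β₁s = -4h²
    have E3 : ∀ z ∈ Ω, (-4:ℂ)*(h z:ℂ)^2 = β₁ z * β₁s z := by
      intro z hz
      have hsm : ContDiffOn ℝ (⊤:ℕ∞)
          (fun w : ℂ => (w - z) * ((starRingEnd ℂ) w - (starRingEnd ℂ) z)) Ω :=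
        ((contDiff_id.sub contDiff_const).mul (hconj.sub contDiff_const)).contDiffOn
      have fac := hfac _ hsm z hz
      rw [LSch_expand (dAt z hz) (dBt z hz) (hsm.contDiffAt (hΩ.mem_nhds hz))] at fac
      have hw3 : ∀ w, wd (fun x : ℂ => (x - z) * ((starRingEnd ℂ) x - (starRingEnd ℂ) z)) w
          = (starRingEnd ℂ) w - (starRingEnd ℂ) z := fun w => by
        rw [wd_mul diff_lin diff_conj, wd_conj, wd_lin]; ring
      have hwb3 : ∀ w, wdb (fun x : ℂ => (x - z) * ((starRingEnd ℂ) x - (starRingEnd ℂ) z)) w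
          = w - z := fun w => by
        rw [wdb_mul diff_lin diff_conj, wdb_conj, wdb_lin]; ring
      simp only [hw3, hwb3] at fac
      rw [wdb_add ((dβ₁s z hz).fun_mul diff_conj) ((dβ₀s z hz).fun_mul (diff_lin.fun_mul diff_conj)),
        wdb_mul (dβ₁s z hz) diff_conj, wdb_mul (dβ₀s z hz) (diff_lin.fun_mul diff_conj),
        wdb_mul diff_lin diff_conj, wdb_conj, wdb_lin] at fac
      simp only [wdb_conj, sub_self, mul_zero, zero_mul, add_zero, zero_add, mul_one] at fac
      linear_combination fac
    -- E2 : β₁ β₀s = 2ih²(a - ib)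
    have E2 : ∀ z ∈ Ω,
        2*Complex.I*(h z:ℂ)^2*((a z:ℂ) - Complex.I*(b z:ℂ)) = β₁ z * β₀s z := by
      intro z hz
      have hsm : ContDiffOn ℝ (⊤:ℕ∞)
          (fun w : ℂ => (starRingEnd ℂ) w - (starRingEnd ℂ) z) Ω :=
        (hconj.sub contDiff_const).contDiffOn
      have fac := hfac _ hsm z hz
      rw [LSch_expand (dAt z hz) (dBt z hz) (hsm.contDiffAt (hΩ.mem_nhds hz))] at fac
      simp only [wd_conj, wdb_conj, mul_zero, zero_mul, add_zero, zero_add, mul_one,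
        wdb_const] at fac
      rw [wdb_mul (dβ₀s z hz) diff_conj, wdb_conj] at fac
      simp only [sub_self, mul_zero, zero_mul, add_zero, zero_add, mul_one] at fac
      linear_combination fac
    -- E1 : β₁ ∂̄β₁s + β₀ β₁s = 2ih²(a + ib), at z₀
    have E1 : 2*Complex.I*(h z₀:ℂ)^2*((a z₀:ℂ) + Complex.I*(b z₀:ℂ))
        = β₁ z₀ * wdb β₁s z₀ + β₀ z₀ * β₁s z₀ := by
      have hsm : ContDiffOn ℝ (⊤:ℕ∞) (fun w : ℂ => w - z₀) Ω :=
        (contDiff_id.sub contDiff_const).contDiffOn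
      have fac := hfac _ hsm z₀ hz₀
      rw [LSch_expand (dAt z₀ hz₀) (dBt z₀ hz₀) (hsm.contDiffAt (hΩ.mem_nhds hz₀))] at fac
      simp only [wd_lin, wdb_lin, mul_zero, zero_mul, add_zero, zero_add, mul_one,
        wdb_const] at fac
      rw [wdb_add (dβ₁s z₀ hz₀) ((dβ₀s z₀ hz₀).fun_mul diff_lin),
        wdb_mul (dβ₀s z₀ hz₀) diff_lin, wdb_lin] at fac
      simp only [sub_self, mul_zero, zero_mul, add_zero, zero_add, mul_one] at fac
      linear_combination fac
    -- E0 : β₁ ∂̄β₀s + β₀ β₀s = ih²(∂ₓa + ∂_y b) + h²(a²+b²) + U, at z₀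
    have E0 : Complex.I*(h z₀:ℂ)^2*((pdxR a z₀:ℂ) + (pdyR b z₀:ℂ))
        + (h z₀:ℂ)^2*((a z₀:ℂ)^2 + (b z₀:ℂ)^2) + (U z₀:ℂ)
        = β₁ z₀ * wdb β₀s z₀ + β₀ z₀ * β₀s z₀ := by
      have fac := hfac (fun _ => (1:ℂ)) contDiffOn_const z₀ hz₀
      rw [LSch_expand (dAt z₀ hz₀) (dBt z₀ hz₀) contDiffAt_const] at fac
      simp only [wd_const, wdb_const, mul_zero, zero_mul, add_zero, zero_add, mul_one] at fac
      linear_combination fac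
    -- β₁ never vanishes
    have hβ₁ne : β₁ z₀ ≠ 0 := by
      intro hcontr
      have := E3 z₀ hz₀
      rw [hcontr, zero_mul] at this
      have hne : ((h z₀ : ℝ) : ℂ) ≠ 0 := Complex.ofReal_ne_zero.2 (hhpos z₀ hz₀).ne'
      exact hne (by
        have h4 : ((-4:ℂ)) * (h z₀:ℂ)^2 = 0 := this
        have := mul_eq_zero.1 h4
        rcases this with h' | h'
        · norm_num at h'
        · exact pow_eq_zero_iff (n := 2) (by norm_num) |>.1 h')
    -- key : β₀s = (-I/2)(a - ib) β₁s on Ω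
    have key : ∀ z ∈ Ω, β₀s z
        = ((-Complex.I/2) * ((a z:ℂ) - Complex.I*(b z:ℂ))) * β₁s z := by
      intro z hz
      have hβne : β₁ z ≠ 0 := by
        intro hcontr
        have := E3 z hz
        rw [hcontr, zero_mul] at this
        have hne : ((h z : ℝ) : ℂ) ≠ 0 := Complex.ofReal_ne_zero.2 (hhpos z hz).ne'
        exact hne (by
          have h4 : ((-4:ℂ)) * (h z:ℂ)^2 = 0 := this
          rcases mul_eq_zero.1 h4 with h' | h'
          · norm_num at h'
          · exact pow_eq_zero_iff (n := 2) (by norm_num) |>.1 h')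
      apply mul_left_cancel₀ hβne
      have e2 := E2 z hz
      have e3 := E3 z hz
      linear_combination -e2 - ((Complex.I/2) * ((a z:ℂ) - Complex.I*(b z:ℂ))) * e3
    -- differentiate key at z₀
    have heq : wdb β₀s z₀
        = wdb (fun w => ((-Complex.I/2) * ((a w:ℂ) - Complex.I*(b w:ℂ))) * β₁s w) z₀ :=
      wdb_congr (Filter.eventuallyEq_of_mem (hΩ.mem_nhds hz₀) key)
    have dc : DifferentiableAt ℝ
        (fun w => (-Complex.I/2) * ((a w:ℂ) - Complex.I*(b w:ℂ))) z₀ :=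
      ((diff_ofReal (dAt z₀ hz₀)).sub ((diff_ofReal (dBt z₀ hz₀)).const_mul _)).const_mul _
    rw [wdb_mul dc (dβ₁s z₀ hz₀),
      wdb_const_mul ((diff_ofReal (dAt z₀ hz₀)).fun_sub ((diff_ofReal (dBt z₀ hz₀)).const_mul _)),
      wdb_sub (diff_ofReal (dAt z₀ hz₀)) ((diff_ofReal (dBt z₀ hz₀)).const_mul _),
      wdb_const_mul (diff_ofReal (dBt z₀ hz₀)),
      wdb_ofReal (dAt z₀ hz₀), wdb_ofReal (dBt z₀ hz₀)] at heq
    -- final algebra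
    have goalC : (U z₀ : ℂ) = ((Bf a b h z₀ : ℝ) : ℂ) := by
      have ek := key z₀ hz₀
      rw [heq, ek] at E0
      rw [show ((Bf a b h z₀ : ℝ) : ℂ)
          = (h z₀:ℂ)^2 * ((pdxR b z₀:ℂ) - (pdyR a z₀:ℂ)) by rw [Bf]; push_cast; ring]
      linear_combination E0
        - ((-Complex.I/2) * ((a z₀:ℂ) - Complex.I*(b z₀:ℂ))) * E1
        - ((-Complex.I/2) * (((pdxR a z₀:ℂ) + Complex.I*(pdyR a z₀:ℂ))/2
            - Complex.I*(((pdxR b z₀:ℂ) + Complex.I*(pdyR b z₀:ℂ))/2))) * (E3 z₀ hz₀)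
        - (h z₀:ℂ)^2*((a z₀:ℂ)^2 - (Complex.I^2-1)*(b z₀:ℂ)^2 - (pdyR a z₀:ℂ)
            + (pdxR b z₀:ℂ) + Complex.I*(pdyR b z₀:ℂ))*Complex.I_sq
    exact_mod_cast goalC
  · -- U = B ⟹ factorisation
    intro hUB
    refine ⟨fun z => (-4:ℂ)*(h z:ℂ)^2,
      fun z => (2*Complex.I) * ((h z:ℂ)^2*((a z:ℂ) + Complex.I*(b z:ℂ))),
      fun _ => (1:ℂ),
      fun z => (-Complex.I/2) * ((a z:ℂ) - Complex.I*(b z:ℂ)),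
      contDiffOn_const.mul (hhC.pow 2),
      contDiffOn_const.mul ((hhC.pow 2).mul (haC.add (contDiffOn_const.mul hbC))),
      contDiffOn_const,
      contDiffOn_const.mul (haC.sub (contDiffOn_const.mul hbC)), ?_⟩
    intro ψ hψ z hz
    have hψz : ContDiffAt ℝ (⊤:ℕ∞) ψ z := hψ.contDiffAt (hΩ.mem_nhds hz)
    have haz : DifferentiableAt ℝ a z :=
      (ha.contDiffAt (hΩ.mem_nhds hz)).differentiableAt (by simp)
    have hbz : DifferentiableAt ℝ b z :=
      (hb.contDiffAt (hΩ.mem_nhds hz)).differentiableAt (by simp)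
    have dψ : DifferentiableAt ℝ ψ z := hψz.differentiableAt (by simp)
    have dc : DifferentiableAt ℝ
        (fun w => (-Complex.I/2) * ((a w:ℂ) - Complex.I*(b w:ℂ))) z :=
      ((diff_ofReal haz).sub ((diff_ofReal hbz).const_mul _)).const_mul _
    rw [LSch_expand haz hbz hψz]
    simp only [one_mul]
    rw [wdb_add (diff_wd hψz) (dc.fun_mul dψ),
      wdb_mul dc dψ,
      wdb_const_mul ((diff_ofReal haz).fun_sub ((diff_ofReal hbz).const_mul _)),
      wdb_sub (diff_ofReal haz) ((diff_ofReal hbz).const_mul _),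
      wdb_const_mul (diff_ofReal hbz),
      wdb_ofReal haz, wdb_ofReal hbz]
    rw [hUB z hz, show ((Bf a b h z : ℝ) : ℂ)
        = (h z:ℂ)^2 * ((pdxR b z:ℂ) - (pdyR a z:ℂ)) by rw [Bf]; push_cast; ring]
    linear_combination ((h z:ℂ)^2 * (Complex.I*(pdyR b z:ℂ) + (a z:ℂ)^2
      + (1 - Complex.I^2)*(b z:ℂ)^2 + (pdxR b z:ℂ) - (pdyR a z:ℂ)) * (ψ z)) * Complex.I_sq
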